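/- Entropy is a strict Lyapunov function for the recombination dynamics: let t ↦ μ^t be a solution of the recombination equation such that μ^t is a probability mass function on X for each t, and let H(μ) = Σ_{x∈X} μ(x) ln μ(x) (with 0·ln 0 = 0). If at some time t₀ the measure μ^{t₀} is strictly positive on X and is not 𝒥-separated, then the derivative of t ↦ H(μ^t) at t₀ is strictly negative; and if μ^{t₀} is 𝒥-separated, this derivative is zero. -/

import Mathlib

open Finset

/-- Restriction of a word to a set of coordinates `M`. -/
def restrictW {Λ : Type*} (K : Λ → Type*) (M : Finset Λ) (x : ∀ i, K i) :
    ∀ i : M, K i := fun i => x i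

/-- Marginal of `μ` on the set of coordinates `M`. -/
def marginal {Λ : Type*} [Fintype Λ] [DecidableEq Λ] (K : Λ → Type*)
    [∀ i, Fintype (K i)] [∀ i, DecidableEq (K i)]
    (μ : (∀ i, K i) → ℝ) (M : Finset Λ) (a : ∀ i : M, K i) : ℝ :=
  ∑ x : ∀ i, K i, if restrictW K M x = a then μ x else 0

/-- One-dimensional marginal of `μ` at coordinate `i`. -/
def marg1 {Λ : Type*} [Fintype Λ] [DecidableEq Λ] (K : Λ → Type*)
    [∀ i, Fintype (K i)] [∀ i, DecidableEq (K i)]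
    (μ : (∀ i, K i) → ℝ) (i : Λ) (a : K i) : ℝ :=
  ∑ x : ∀ i, K i, if x i = a then μ x else 0

/-- `I`-recombination: the word equal to `a` on `I` and to `x` off `I`. -/
def recombW {Λ : Type*} [DecidableEq Λ] (K : Λ → Type*) (I : Finset Λ)
    (x : ∀ i, K i) (a : ∀ i : I, K i) : ∀ i, K i :=
  fun i => if h : i ∈ I then a ⟨i, h⟩ else x i

/-- Right hand side of the recombination equation. -/
def recombRHS {Λ : Type*} [Fintype Λ] [DecidableEq Λ] (K : Λ → Type*)
    [∀ i, Fintype (K i)] [∀ i, DecidableEq (K i)]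
    (𝒥 : Finset (Finset Λ))
    (φ : ∀ I : Finset Λ, (∀ i : I, K i) → (∀ i : I, K i) → ℝ)
    (μ : (∀ i, K i) → ℝ) (x : ∀ i, K i) : ℝ :=
  ∑ I ∈ 𝒥, ∑ y : ∀ i : I, K i,
    (φ I y (restrictW K I x) * marginal K μ I (restrictW K I x) * μ (recombW K I x y)
      - φ I (restrictW K I x) y * marginal K μ I y * μ x)

/-- A probability mass function on `∀ i, K i`. -/
def IsPMF {Λ : Type*} [Fintype Λ] [DecidableEq Λ] (K : Λ → Type*) [∀ i, Fintype (K i)]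
    (μ : (∀ i, K i) → ℝ) : Prop :=
  (∀ x, 0 ≤ μ x) ∧ ∑ x : ∀ i, K i, μ x = 1

/-- `𝒥`-separated measure. -/
def IsSeparated {Λ : Type*} [Fintype Λ] [DecidableEq Λ] (K : Λ → Type*)
    [∀ i, Fintype (K i)] [∀ i, DecidableEq (K i)]
    (𝒥 : Finset (Finset Λ)) (μ : (∀ i, K i) → ℝ) : Prop :=
  ∀ I ∈ 𝒥, ∀ x, μ x = marginal K μ I (restrictW K I x) * marginal K μ Iᶜ (restrictW K Iᶜ x)

/-- A `T₀`-system of frames. -/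
def IsT0 {Λ : Type*} (𝒥 : Finset (Finset Λ)) : Prop :=
  ∀ i j : Λ, i ≠ j → ∃ I ∈ 𝒥, (i ∈ I ∧ j ∉ I) ∨ (j ∈ I ∧ i ∉ I)

/-- (Minus-)Shannon entropy `H(μ) = ∑ μ(x) ln μ(x)` (note `Real.log 0 = 0`). -/
noncomputable def minusEntropy {Λ : Type*} [Fintype Λ] [DecidableEq Λ] (K : Λ → Type*)
    [∀ i, Fintype (K i)] [∀ i, DecidableEq (K i)]
    (μ : (∀ i, K i) → ℝ) : ℝ :=
  ∑ x : ∀ i, K i, μ x * Real.log (μ x)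

set_option linter.unusedSectionVars false

section Helpers

variable {Λ : Type*} [Fintype Λ] [DecidableEq Λ] {K : Λ → Type*}
  [∀ i, Fintype (K i)] [∀ i, DecidableEq (K i)]

lemma restrict_recomb (I : Finset Λ) (x : ∀ i, K i) (y : ∀ i : I, K i) :
    restrictW K I (recombW K I x y) = y := by
  funext i; simp [restrictW, recombW, i.2]

lemma restrict_compl_recomb (I : Finset Λ) (x : ∀ i, K i) (y : ∀ i : I, K i) :
    restrictW K Iᶜ (recombW K I x y) = restrictW K Iᶜ x := by
  funext i
  have hi : (i : Λ) ∉ I := Finset.mem_compl.mp i.2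
  simp [restrictW, recombW, hi]

lemma recomb_recomb (I : Finset Λ) (x : ∀ i, K i) (y : ∀ i : I, K i) :
    recombW K I (recombW K I x y) (restrictW K I x) = x := by
  funext i; by_cases h : i ∈ I <;> simp [recombW, restrictW, h]

lemma recomb_restrict (I : Finset Λ) (x z : ∀ i, K i)
    (h : restrictW K Iᶜ z = restrictW K Iᶜ x) :
    recombW K I x (restrictW K I z) = z := by
  funext i; by_cases hi : i ∈ I
  · simp [recombW, restrictW, hi]
  · have h2 : z i = x i := congrFun h ⟨i, Finset.mem_compl.mpr hi⟩
    simp [recombW, hi, h2]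

/-- The recombination involution on pairs. -/
def recombEquiv (I : Finset Λ) :
    ((∀ i, K i) × (∀ i : I, K i)) ≃ ((∀ i, K i) × (∀ i : I, K i)) where
  toFun p := (recombW K I p.1 p.2, restrictW K I p.1)
  invFun p := (recombW K I p.1 p.2, restrictW K I p.1)
  left_inv p := by
    ext1
    · exact recomb_recomb I p.1 p.2
    · exact restrict_recomb I p.1 p.2
  right_inv p := by
    ext1
    · exact recomb_recomb I p.1 p.2
    · exact restrict_recomb I p.1 p.2

lemma sum_involution (I : Finset Λ) (F : (∀ i, K i) → (∀ i : I, K i) → ℝ) :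
    ∑ x : ∀ i, K i, ∑ y : ∀ i : I, K i, F x y
      = ∑ x : ∀ i, K i, ∑ y : ∀ i : I, K i, F (recombW K I x y) (restrictW K I x) := by
  rw [← Fintype.sum_prod_type (fun p => F p.1 p.2),
    ← Fintype.sum_prod_type (fun p => F (recombW K I p.1 p.2) (restrictW K I p.1))]
  exact ((recombEquiv (K := K) I).sum_comp (fun p => F p.1 p.2)).symm

lemma marginal_nonneg (μ : (∀ i, K i) → ℝ) (hμ : ∀ x, 0 ≤ μ x) (I : Finset Λ)
    (a : ∀ i : I, K i) : 0 ≤ marginal K μ I a :=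
  Finset.sum_nonneg fun x _ => by split <;> [exact hμ x; exact le_refl 0]

lemma marginal_le_one (μ : (∀ i, K i) → ℝ) (hμ : ∀ x, 0 ≤ μ x)
    (hs : ∑ x : ∀ i, K i, μ x = 1) (I : Finset Λ) (a : ∀ i : I, K i) :
    marginal K μ I a ≤ 1 := by
  rw [← hs]
  exact Finset.sum_le_sum fun x _ => by split <;> [exact le_refl _; exact hμ x]

lemma marginal_pos [∀ i, Nonempty (K i)] (μ : (∀ i, K i) → ℝ) (hμ : ∀ x, 0 < μ x)
    (I : Finset Λ) (a : ∀ i : I, K i) : 0 < marginal K μ I a := by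
  classical
  set x₀ : ∀ i, K i := fun i => if h : i ∈ I then a ⟨i, h⟩ else Classical.arbitrary _ with hx₀
  have hr : restrictW K I x₀ = a := by
    funext i; simp [restrictW, hx₀, i.2]
  refine Finset.sum_pos' (fun x _ => by split <;> [exact (hμ x).le; exact le_refl 0]) ⟨x₀, Finset.mem_univ _, ?_⟩
  simp [hr, hμ x₀]

lemma sum_marginal (μ : (∀ i, K i) → ℝ) (I : Finset Λ) :
    ∑ a : ∀ i : I, K i, marginal K μ I a = ∑ x : ∀ i, K i, μ x := by
  unfold marginal
  rw [Finset.sum_comm]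
  exact Finset.sum_congr rfl fun x _ => by
    rw [Finset.sum_ite_eq univ (restrictW K I x) (fun _ => μ x)]; simp

lemma sum_fiber (μ : (∀ i, K i) → ℝ) (I : Finset Λ) (f : (∀ i : I, K i) → ℝ) :
    ∑ x : ∀ i, K i, f (restrictW K I x) * μ x = ∑ a : ∀ i : I, K i, f a * marginal K μ I a := by
  unfold marginal
  simp only [Finset.mul_sum]
  rw [Finset.sum_comm]
  refine Finset.sum_congr rfl fun x _ => ?_
  rw [Finset.sum_congr rfl fun a _ => (show f a * (if restrictW K I x = a then μ x else 0)
      = (if restrictW K I x = a then f a * μ x else 0) by split <;> simp),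
    Finset.sum_ite_eq univ (restrictW K I x) (fun a => f a * μ x)]; simp

lemma sum_recomb (μ : (∀ i, K i) → ℝ) (I : Finset Λ) (x : ∀ i, K i) :
    ∑ y : ∀ i : I, K i, μ (recombW K I x y) = marginal K μ Iᶜ (restrictW K Iᶜ x) := by
  unfold marginal
  have key : ∀ z : ∀ i, K i,
      (if restrictW K Iᶜ z = restrictW K Iᶜ x then μ z else 0)
        = ∑ y : ∀ i : I, K i, if z = recombW K I x y then μ z else 0 := by
    intro z
    by_cases h : restrictW K Iᶜ z = restrictW K Iᶜ x
    · rw [if_pos h]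
      have : ∀ y : ∀ i : I, K i, (z = recombW K I x y) ↔ (y = restrictW K I z) := by
        intro y
        constructor
        · rintro rfl; exact (restrict_recomb I x y).symm
        · rintro rfl; exact (recomb_restrict I x z h).symm
      rw [Finset.sum_congr rfl fun y _ => if_congr (this y) rfl rfl,
        Finset.sum_ite_eq' univ (restrictW K I z) (fun _ => μ z)]
      simp
    · rw [if_neg h]
      refine (Finset.sum_eq_zero fun y _ => ?_).symm
      rw [if_neg]
      rintro rfl
      exact h (restrict_compl_recomb I x y)
  rw [Finset.sum_congr rfl fun z _ => key z, Finset.sum_comm]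
  refine Finset.sum_congr rfl fun y _ => ?_
  rw [Finset.sum_ite_eq' univ (recombW K I x y) μ]; simp

end Helpers

section Core

variable {Λ : Type*} [Fintype Λ] [DecidableEq Λ] {K : Λ → Type*}
  [∀ i, Fintype (K i)] [∀ i, DecidableEq (K i)] [∀ i, Nonempty (K i)]

lemma frame_eq (ν : (∀ i, K i) → ℝ) (hpos : ∀ x, 0 < ν x)
    (I : Finset Λ) (φI : (∀ i : I, K i) → (∀ i : I, K i) → ℝ)
    (hφs : ∀ a b, φI a b = φI b a) :
    ∑ x : ∀ i, K i, ∑ y : ∀ i : I, K i,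
      (φI y (restrictW K I x) * marginal K ν I (restrictW K I x) * ν (recombW K I x y)
        - φI (restrictW K I x) y * marginal K ν I y * ν x) * Real.log (ν x)
    = ∑ x : ∀ i, K i, ∑ y : ∀ i : I, K i,
        φI (restrictW K I x) y * marginal K ν I y * ν x *
          (Real.log ((ν (recombW K I x y) * marginal K ν I (restrictW K I x))
              / (ν x * marginal K ν I y))
           - ((ν (recombW K I x y) * marginal K ν I (restrictW K I x))
              / (ν x * marginal K ν I y) - 1)) := by
  set m := marginal K ν I with hm_def
  have hm : ∀ a, 0 < m a := marginal_pos ν hpos I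
  -- involution identity 1
  have key1 : ∑ x : ∀ i, K i, ∑ y : ∀ i : I, K i,
      φI y (restrictW K I x) * m (restrictW K I x) * ν (recombW K I x y) * Real.log (ν x)
      = ∑ x : ∀ i, K i, ∑ y : ∀ i : I, K i,
      φI (restrictW K I x) y * m y * ν x * Real.log (ν (recombW K I x y)) := by
    rw [sum_involution I (fun x y =>
      φI y (restrictW K I x) * m (restrictW K I x) * ν (recombW K I x y) * Real.log (ν x))]
    refine Finset.sum_congr rfl fun x _ => Finset.sum_congr rfl fun y _ => ?_
    rw [restrict_recomb, recomb_recomb]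
  -- involution identity 2
  have key3 : ∑ x : ∀ i, K i, ∑ y : ∀ i : I, K i,
      φI (restrictW K I x) y * m (restrictW K I x) * ν (recombW K I x y)
      = ∑ x : ∀ i, K i, ∑ y : ∀ i : I, K i, φI (restrictW K I x) y * m y * ν x := by
    rw [sum_involution I (fun x y =>
      φI (restrictW K I x) y * m (restrictW K I x) * ν (recombW K I x y))]
    refine Finset.sum_congr rfl fun x _ => Finset.sum_congr rfl fun y _ => ?_
    rw [restrict_recomb, recomb_recomb, hφs]
  -- antisymmetric part vanishes
  have key2 : ∑ x : ∀ i, K i, ∑ y : ∀ i : I, K i,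
      φI (restrictW K I x) y * m y * ν x * (Real.log (m y) - Real.log (m (restrictW K I x)))
      = 0 := by
    rw [Finset.sum_comm]
    have step : ∀ y : ∀ i : I, K i,
        ∑ x : ∀ i, K i, φI (restrictW K I x) y * m y * ν x
            * (Real.log (m y) - Real.log (m (restrictW K I x)))
        = ∑ a : ∀ i : I, K i,
            φI a y * m y * (Real.log (m y) - Real.log (m a)) * m a := by
      intro y
      rw [← sum_fiber ν I (fun a => φI a y * m y * (Real.log (m y) - Real.log (m a)))]
      exact Finset.sum_congr rfl fun x _ => by ring
    rw [Finset.sum_congr rfl fun y _ => step y]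
    set c : (∀ i : I, K i) → (∀ i : I, K i) → ℝ :=
      fun a b => φI a b * m b * (Real.log (m b) - Real.log (m a)) * m a with hc
    have h1 : (∑ b : ∀ i : I, K i, ∑ a : ∀ i : I, K i, c a b)
        = ∑ a : ∀ i : I, K i, ∑ b : ∀ i : I, K i, c a b := Finset.sum_comm
    have h2 : (∑ a : ∀ i : I, K i, ∑ b : ∀ i : I, K i, c a b)
        = ∑ a : ∀ i : I, K i, ∑ b : ∀ i : I, K i, -(c b a) := by
      refine Finset.sum_congr rfl fun a _ => Finset.sum_congr rfl fun b _ => ?_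
      simp only [hc]
      rw [hφs a b]; ring
    have h3 : (∑ a : ∀ i : I, K i, ∑ b : ∀ i : I, K i, -(c b a))
        = -∑ a : ∀ i : I, K i, ∑ b : ∀ i : I, K i, c b a := by
      simp [Finset.sum_neg_distrib]
    have h4 : (∑ a : ∀ i : I, K i, ∑ b : ∀ i : I, K i, c b a)
        = ∑ b : ∀ i : I, K i, ∑ a : ∀ i : I, K i, c a b := rfl
    linarith [h1, h2.symm ▸ (h1.trans h2)]
  -- pointwise: w * z = the other product
  have hwz : ∀ (x : ∀ i, K i) (y : ∀ i : I, K i),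
      φI (restrictW K I x) y * m y * ν x *
        ((ν (recombW K I x y) * m (restrictW K I x)) / (ν x * m y))
      = φI (restrictW K I x) y * m (restrictW K I x) * ν (recombW K I x y) := by
    intro x y
    have h1 : ν x ≠ 0 := (hpos x).ne'
    have h2 : m y ≠ 0 := (hm y).ne'
    field_simp
  -- pointwise log decomposition
  have hlog : ∀ (x : ∀ i, K i) (y : ∀ i : I, K i),
      Real.log (ν (recombW K I x y)) - Real.log (ν x)
      = Real.log ((ν (recombW K I x y) * m (restrictW K I x)) / (ν x * m y))
        + (Real.log (m y) - Real.log (m (restrictW K I x))) := by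
    intro x y
    rw [Real.log_div (mul_pos (hpos _) (hm _)).ne' (mul_pos (hpos x) (hm y)).ne', Real.log_mul (hpos _).ne' (hm _).ne',
      Real.log_mul (hpos x).ne' (hm y).ne']
    ring
  -- assemble
  calc ∑ x : ∀ i, K i, ∑ y : ∀ i : I, K i,
      (φI y (restrictW K I x) * m (restrictW K I x) * ν (recombW K I x y)
        - φI (restrictW K I x) y * m y * ν x) * Real.log (ν x)
      = (∑ x : ∀ i, K i, ∑ y : ∀ i : I, K i,
          φI y (restrictW K I x) * m (restrictW K I x) * ν (recombW K I x y) * Real.log (ν x))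
        - ∑ x : ∀ i, K i, ∑ y : ∀ i : I, K i,
          φI (restrictW K I x) y * m y * ν x * Real.log (ν x) := by
        simp only [sub_mul, Finset.sum_sub_distrib]
    _ = ∑ x : ∀ i, K i, ∑ y : ∀ i : I, K i,
          φI (restrictW K I x) y * m y * ν x
            * (Real.log (ν (recombW K I x y)) - Real.log (ν x)) := by
        rw [key1]
        simp only [mul_sub, Finset.sum_sub_distrib]
    _ = (∑ x : ∀ i, K i, ∑ y : ∀ i : I, K i,
          φI (restrictW K I x) y * m y * ν x
            * Real.log ((ν (recombW K I x y) * m (restrictW K I x)) / (ν x * m y)))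
        + ∑ x : ∀ i, K i, ∑ y : ∀ i : I, K i,
          φI (restrictW K I x) y * m y * ν x
            * (Real.log (m y) - Real.log (m (restrictW K I x))) := by
        rw [← Finset.sum_add_distrib]
        refine Finset.sum_congr rfl fun x _ => ?_
        rw [← Finset.sum_add_distrib]
        refine Finset.sum_congr rfl fun y _ => ?_
        rw [hlog x y]; ring
    _ = ∑ x : ∀ i, K i, ∑ y : ∀ i : I, K i,
          φI (restrictW K I x) y * m y * ν x
            * Real.log ((ν (recombW K I x y) * m (restrictW K I x)) / (ν x * m y)) := by
        rw [key2, add_zero]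
    _ = (∑ x : ∀ i, K i, ∑ y : ∀ i : I, K i,
          φI (restrictW K I x) y * m y * ν x
            * Real.log ((ν (recombW K I x y) * m (restrictW K I x)) / (ν x * m y)))
        - ((∑ x : ∀ i, K i, ∑ y : ∀ i : I, K i,
            φI (restrictW K I x) y * m y * ν x
              * ((ν (recombW K I x y) * m (restrictW K I x)) / (ν x * m y)))
          - ∑ x : ∀ i, K i, ∑ y : ∀ i : I, K i,
            φI (restrictW K I x) y * m y * ν x) := by
        rw [Finset.sum_congr rfl fun x _ => Finset.sum_congr rfl fun y _ => hwz x y, key3]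
        ring
    _ = _ := by
        simp only [mul_sub, mul_one, Finset.sum_sub_distrib]

end Core

section Core2

variable {Λ : Type*} [Fintype Λ] [DecidableEq Λ] {K : Λ → Type*}
  [∀ i, Fintype (K i)] [∀ i, DecidableEq (K i)] [∀ i, Nonempty (K i)]

lemma sep_rhs_zero (ν : (∀ i, K i) → ℝ) (𝒥 : Finset (Finset Λ))
    (φ : ∀ I : Finset Λ, (∀ i : I, K i) → (∀ i : I, K i) → ℝ)
    (hφsymm : ∀ I ∈ 𝒥, ∀ a b, φ I a b = φ I b a)
    (hsep : IsSeparated K 𝒥 ν) (x : ∀ i, K i) :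
    recombRHS K 𝒥 φ ν x = 0 := by
  unfold recombRHS
  refine Finset.sum_eq_zero fun I hI => Finset.sum_eq_zero fun y _ => ?_
  have h1 := hsep I hI (recombW K I x y)
  have h2 := hsep I hI x
  rw [restrict_recomb, restrict_compl_recomb] at h1
  rw [h1, h2, hφsymm I hI y (restrictW K I x)]
  ring

lemma frame_le (ν : (∀ i, K i) → ℝ) (hpos : ∀ x, 0 < ν x)
    (I : Finset Λ) (φI : (∀ i : I, K i) → (∀ i : I, K i) → ℝ)
    (hφp : ∀ a b, 0 < φI a b) (hφs : ∀ a b, φI a b = φI b a) :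
    ∑ x : ∀ i, K i, ∑ y : ∀ i : I, K i,
      (φI y (restrictW K I x) * marginal K ν I (restrictW K I x) * ν (recombW K I x y)
        - φI (restrictW K I x) y * marginal K ν I y * ν x) * Real.log (ν x) ≤ 0 := by
  rw [frame_eq ν hpos I φI hφs]
  refine Finset.sum_nonpos fun x _ => Finset.sum_nonpos fun y _ => ?_
  have hz : 0 < (ν (recombW K I x y) * marginal K ν I (restrictW K I x))
      / (ν x * marginal K ν I y) :=
    div_pos (mul_pos (hpos _) (marginal_pos ν hpos I _)) (mul_pos (hpos x) (marginal_pos ν hpos I y))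
  have hw : 0 ≤ φI (restrictW K I x) y * marginal K ν I y * ν x :=
    le_of_lt (mul_pos (mul_pos (hφp _ _) (marginal_pos ν hpos I y)) (hpos x))
  exact mul_nonpos_of_nonneg_of_nonpos hw
    (sub_nonpos.mpr (Real.log_le_sub_one_of_pos hz))

lemma frame_lt (ν : (∀ i, K i) → ℝ) (hpos : ∀ x, 0 < ν x)
    (hsum : ∑ x : ∀ i, K i, ν x = 1)
    (I : Finset Λ) (φI : (∀ i : I, K i) → (∀ i : I, K i) → ℝ)
    (hφp : ∀ a b, 0 < φI a b) (hφs : ∀ a b, φI a b = φI b a)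
    (x₀ : ∀ i, K i)
    (hx₀ : ν x₀ ≠ marginal K ν I (restrictW K I x₀) * marginal K ν Iᶜ (restrictW K Iᶜ x₀)) :
    ∑ x : ∀ i, K i, ∑ y : ∀ i : I, K i,
      (φI y (restrictW K I x) * marginal K ν I (restrictW K I x) * ν (recombW K I x y)
        - φI (restrictW K I x) y * marginal K ν I y * ν x) * Real.log (ν x) < 0 := by
  rw [frame_eq ν hpos I φI hφs]
  set m := marginal K ν I with hm_def
  have hm : ∀ a, 0 < m a := marginal_pos ν hpos I
  -- find y₀ with ratio ≠ 1
  have hy₀ : ∃ y₀ : ∀ i : I, K i,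
      (ν (recombW K I x₀ y₀) * m (restrictW K I x₀)) / (ν x₀ * m y₀) ≠ 1 := by
    by_contra hcon
    push_neg at hcon
    have hall : ∀ y : ∀ i : I, K i,
        ν (recombW K I x₀ y) * m (restrictW K I x₀) = ν x₀ * m y := by
      intro y
      have h := hcon y
      have hne : ν x₀ * m y ≠ 0 := (mul_pos (hpos x₀) (hm y)).ne'
      exact (div_eq_one_iff_eq hne).mp h
    have hsum2 : (∑ y : ∀ i : I, K i, ν (recombW K I x₀ y)) * m (restrictW K I x₀)
        = ν x₀ * ∑ y : ∀ i : I, K i, m y := by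
      rw [Finset.sum_mul, Finset.mul_sum]
      exact Finset.sum_congr rfl fun y _ => hall y
    rw [sum_recomb, hm_def, sum_marginal, hsum, mul_one] at hsum2
    exact hx₀ (by rw [← hsum2]; ring)
  obtain ⟨y₀, hy₀⟩ := hy₀
  have hterm : ∀ (x : ∀ i, K i), ∀ y : ∀ i : I, K i,
      φI (restrictW K I x) y * m y * ν x *
        (Real.log ((ν (recombW K I x y) * m (restrictW K I x)) / (ν x * m y))
          - ((ν (recombW K I x y) * m (restrictW K I x)) / (ν x * m y) - 1)) ≤ 0 := by
    intro x y
    have hz : 0 < (ν (recombW K I x y) * m (restrictW K I x)) / (ν x * m y) :=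
      div_pos (mul_pos (hpos _) (hm _)) (mul_pos (hpos x) (hm y))
    exact mul_nonpos_of_nonneg_of_nonpos
      (le_of_lt (mul_pos (mul_pos (hφp _ _) (hm y)) (hpos x)))
      (sub_nonpos.mpr (Real.log_le_sub_one_of_pos hz))
  have hinner : ∑ y : ∀ i : I, K i,
      φI (restrictW K I x₀) y * m y * ν x₀ *
        (Real.log ((ν (recombW K I x₀ y) * m (restrictW K I x₀)) / (ν x₀ * m y))
          - ((ν (recombW K I x₀ y) * m (restrictW K I x₀)) / (ν x₀ * m y) - 1)) < 0 := by
    have hz : 0 < (ν (recombW K I x₀ y₀) * m (restrictW K I x₀)) / (ν x₀ * m y₀) :=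
      div_pos (mul_pos (hpos _) (hm _)) (mul_pos (hpos x₀) (hm y₀))
    have hstrict : φI (restrictW K I x₀) y₀ * m y₀ * ν x₀ *
        (Real.log ((ν (recombW K I x₀ y₀) * m (restrictW K I x₀)) / (ν x₀ * m y₀))
          - ((ν (recombW K I x₀ y₀) * m (restrictW K I x₀)) / (ν x₀ * m y₀) - 1)) < 0 :=
      mul_neg_of_pos_of_neg (mul_pos (mul_pos (hφp _ _) (hm y₀)) (hpos x₀))
        (sub_neg.mpr (Real.log_lt_sub_one_of_pos hz hy₀))
    calc ∑ y : ∀ i : I, K i, _ < ∑ y : ∀ i : I, K i, (0:ℝ) :=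
          Finset.sum_lt_sum (fun y _ => hterm x₀ y) ⟨y₀, Finset.mem_univ _, hstrict⟩
      _ = 0 := Finset.sum_const_zero
  calc ∑ x : ∀ i, K i, ∑ y : ∀ i : I, K i, _ < ∑ x : ∀ i, K i, (0:ℝ) :=
        Finset.sum_lt_sum
          (fun x _ => Finset.sum_nonpos fun y _ => hterm x y)
          ⟨x₀, Finset.mem_univ _, hinner⟩
    _ = 0 := Finset.sum_const_zero

lemma D_neg (ν : (∀ i, K i) → ℝ) (hpos : ∀ x, 0 < ν x)
    (hsum : ∑ x : ∀ i, K i, ν x = 1)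
    (𝒥 : Finset (Finset Λ))
    (φ : ∀ I : Finset Λ, (∀ i : I, K i) → (∀ i : I, K i) → ℝ)
    (hφpos : ∀ I ∈ 𝒥, ∀ a b, 0 < φ I a b)
    (hφsymm : ∀ I ∈ 𝒥, ∀ a b, φ I a b = φ I b a)
    (hnotsep : ¬ IsSeparated K 𝒥 ν) :
    ∑ x : ∀ i, K i, recombRHS K 𝒥 φ ν x * Real.log (ν x) < 0 := by
  unfold IsSeparated at hnotsep
  push_neg at hnotsep
  obtain ⟨I₀, hI₀, x₀, hx₀⟩ := hnotsep
  unfold recombRHS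
  simp only [Finset.sum_mul]
  rw [Finset.sum_comm]
  calc ∑ I ∈ 𝒥, ∑ x : ∀ i, K i, ∑ y : ∀ i : I, K i,
        (φ I y (restrictW K I x) * marginal K ν I (restrictW K I x) * ν (recombW K I x y)
          - φ I (restrictW K I x) y * marginal K ν I y * ν x) * Real.log (ν x)
      < ∑ I ∈ 𝒥, (0:ℝ) := by
        refine Finset.sum_lt_sum (fun I hI => frame_le ν hpos I (φ I) (hφpos I hI) (hφsymm I hI))
          ⟨I₀, hI₀, frame_lt ν hpos hsum I₀ (φ I₀) (hφpos I₀ hI₀) (hφsymm I₀ hI₀) x₀ hx₀⟩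
    _ = 0 := Finset.sum_const_zero

end Core2

section Analysis

variable {Λ : Type*} [Fintype Λ] [DecidableEq Λ] {K : Λ → Type*}
  [∀ i, Fintype (K i)] [∀ i, DecidableEq (K i)]

lemma hasDerivAt_marginal (μ : ℝ → (∀ i, K i) → ℝ) (d : (∀ i, K i) → ℝ) (t : ℝ)
    (h : ∀ x, HasDerivAt (fun s => μ s x) (d x) t) (I : Finset Λ) (a : ∀ i : I, K i) :
    HasDerivAt (fun s => marginal K (μ s) I a) (marginal K d I a) t := by
  unfold marginal
  refine HasDerivAt.fun_sum fun x _ => ?_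
  by_cases hc : restrictW K I x = a
  · simp only [if_pos hc]; exact h x
  · simp only [if_neg hc]; exact hasDerivAt_const t 0

lemma mul_log_le_sqrt (u : ℝ) (h0 : 0 ≤ u) (h1 : u ≤ 1) :
    |u * Real.log u| ≤ 2 * Real.sqrt u := by
  rcases h0.eq_or_lt with h | h
  · rw [← h]; simp
  · have hlog : Real.log u ≤ 0 := Real.log_nonpos h0 h1
    have hsq : 0 < Real.sqrt u := Real.sqrt_pos.mpr h
    have key : -Real.log u ≤ 2 / Real.sqrt u := by
      have h2 := Real.log_le_sub_one_of_pos (show 0 < (Real.sqrt u)⁻¹ by positivity)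
      rw [Real.log_inv, Real.log_sqrt h0] at h2
      have h3 : -(Real.log u / 2) ≤ (Real.sqrt u)⁻¹ := by linarith
      rw [div_eq_mul_inv]
      nlinarith [hsq.le]
    have habs : |u * Real.log u| = u * (-Real.log u) := by
      rw [abs_of_nonpos (mul_nonpos_of_nonneg_of_nonpos h0 hlog)]; ring
    rw [habs]
    calc u * (-Real.log u) ≤ u * (2 / Real.sqrt u) :=
          mul_le_mul_of_nonneg_left key h0
      _ = 2 * (u / Real.sqrt u) := by ring
      _ = 2 * Real.sqrt u := by rw [Real.div_sqrt]

lemma zero_deriv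
    (𝒥 : Finset (Finset Λ))
    (φ : ∀ I : Finset Λ, (∀ i : I, K i) → (∀ i : I, K i) → ℝ)
    (hφpos : ∀ I ∈ 𝒥, ∀ a b, 0 < φ I a b)
    (μ : ℝ → (∀ i, K i) → ℝ)
    (hsol : ∀ x t, HasDerivAt (fun s => μ s x) (recombRHS K 𝒥 φ (μ t) x) t)
    (hpmf : ∀ t, (∀ x, 0 ≤ μ t x) ∧ ∑ x : ∀ i, K i, μ t x = 1)
    (t₀ : ℝ) (x : ∀ i, K i) (hx0 : μ t₀ x = 0) :
    HasDerivAt (fun t => μ t x * Real.log (μ t x)) 0 t₀ := by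
  classical
  set gain : ℝ → ℝ := fun t => ∑ I ∈ 𝒥, ∑ y : ∀ i : I, K i,
    φ I y (restrictW K I x) * marginal K (μ t) I (restrictW K I x) * μ t (recombW K I x y)
    with hgain_def
  set loss : ℝ → ℝ := fun t => ∑ I ∈ 𝒥, ∑ y : ∀ i : I, K i,
    φ I (restrictW K I x) y * marginal K (μ t) I y * μ t x with hloss_def
  have hsplit : ∀ t, recombRHS K 𝒥 φ (μ t) x = gain t - loss t := by
    intro t
    simp only [recombRHS, hgain_def, hloss_def, Finset.sum_sub_distrib]
  have hm' : ∀ t, HasDerivAt (fun s => μ s x) (gain t - loss t) t :=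
    fun t => (hsplit t) ▸ hsol x t
  have hm0 : ∀ t, 0 ≤ μ t x := fun t => (hpmf t).1 x
  have hm1 : ∀ t, μ t x ≤ 1 := by
    intro t
    rw [← (hpmf t).2]
    exact Finset.single_le_sum (fun z _ => (hpmf t).1 z) (Finset.mem_univ x)
  have hgain_nonneg : ∀ t, 0 ≤ gain t := by
    intro t
    refine Finset.sum_nonneg fun I hI => Finset.sum_nonneg fun y _ => ?_
    exact mul_nonneg (mul_nonneg (hφpos I hI _ _).le
      (marginal_nonneg _ (hpmf t).1 I _)) ((hpmf t).1 _)
  have hloss_nonneg : ∀ t, 0 ≤ loss t := by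
    intro t
    refine Finset.sum_nonneg fun I hI => Finset.sum_nonneg fun y _ => ?_
    exact mul_nonneg (mul_nonneg (hφpos I hI _ _).le
      (marginal_nonneg _ (hpmf t).1 I _)) ((hpmf t).1 _)
  set C : ℝ := ∑ I ∈ 𝒥, ∑ y : ∀ i : I, K i, φ I (restrictW K I x) y with hC_def
  have hloss_le : ∀ t, loss t ≤ C * μ t x := by
    intro t
    rw [hC_def, Finset.sum_mul]
    refine Finset.sum_le_sum fun I hI => ?_
    rw [Finset.sum_mul]
    refine Finset.sum_le_sum fun y _ => ?_
    have h1 : marginal K (μ t) I y ≤ 1 := marginal_le_one _ (hpmf t).1 (hpmf t).2 I y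
    have h2 : 0 ≤ marginal K (μ t) I y := marginal_nonneg _ (hpmf t).1 I y
    calc φ I (restrictW K I x) y * marginal K (μ t) I y * μ t x
        ≤ φ I (restrictW K I x) y * 1 * μ t x :=
          mul_le_mul_of_nonneg_right
            (mul_le_mul_of_nonneg_left h1 (hφpos I hI _ y).le) (hm0 t)
      _ = φ I (restrictW K I x) y * μ t x := by ring
  -- μ t x = 0 for t ≤ t₀
  have hmin : IsLocalMin (fun s => μ s x) t₀ :=
    Filter.Eventually.of_forall fun t => by simpa [hx0] using hm0 t
  have hder0 : gain t₀ - loss t₀ = 0 := hmin.hasDerivAt_eq_zero (hm' t₀)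
  have hloss0 : loss t₀ = 0 := by
    simp only [hloss_def, hx0, mul_zero, Finset.sum_const_zero]
  have hgain0 : gain t₀ = 0 := by linarith
  have hleft : ∀ t ≤ t₀, μ t x = 0 := by
    intro t ht
    set ψ : ℝ → ℝ := fun s => Real.exp (C * s) * μ s x with hψ_def
    have hψ : ∀ s, HasDerivAt ψ (Real.exp (C * s) * (C * μ s x + (gain s - loss s))) s := by
      intro s
      have h1 := (((hasDerivAt_id s).const_mul C).exp).fun_mul (hm' s)
      refine h1.congr_deriv ?_
      simp only [id_eq]
      ring
    have hmono : Monotone ψ := by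
      refine monotone_of_deriv_nonneg (fun s => (hψ s).differentiableAt) fun s => ?_
      rw [(hψ s).deriv]
      have := hgain_nonneg s
      have := hloss_le s
      have := Real.exp_pos (C * s)
      nlinarith
    have h2 : ψ t ≤ ψ t₀ := hmono ht
    have h3 : ψ t₀ = 0 := by simp [hψ_def, hx0]
    have h4 : 0 < Real.exp (C * t) := Real.exp_pos _
    have h2' : Real.exp (C * t) * μ t x ≤ 0 := by
      have := h2
      rw [hψ_def] at this
      simp only at this
      rw [h3] at h2
      simpa [hψ_def] using h2
    nlinarith [hm0 t, h2']
  -- gain has derivative 0 at t₀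
  have hG : HasDerivAt gain 0 t₀ := by
    have hterm : ∀ (I : Finset Λ) (y : ∀ i : I, K i), ∃ d : ℝ,
        HasDerivAt (fun t => φ I y (restrictW K I x) * marginal K (μ t) I (restrictW K I x)
          * μ t (recombW K I x y)) d t₀ := by
      intro I y
      exact ⟨_, (HasDerivAt.const_mul (φ I y (restrictW K I x))
        (hasDerivAt_marginal μ (recombRHS K 𝒥 φ (μ t₀)) t₀
          (fun z => hsol z t₀) I (restrictW K I x))).mul (hsol (recombW K I x y) t₀)⟩
    choose d hd using hterm
    obtain ⟨D, hD⟩ : ∃ D, HasDerivAt gain D t₀ :=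
      ⟨_, HasDerivAt.fun_sum fun I _ => HasDerivAt.fun_sum fun y _ => hd I y⟩
    have hminG : IsLocalMin gain t₀ :=
      Filter.Eventually.of_forall fun t => by rw [hgain0]; exact hgain_nonneg t
    have := hminG.hasDerivAt_eq_zero hD
    rwa [this] at hD
  -- final little-o argument
  rw [hasDerivAt_iff_isLittleO]
  simp only [hx0, Real.log_zero, mul_zero, sub_zero, smul_zero]
  rw [Asymptotics.isLittleO_iff]
  intro c hc
  set ε : ℝ := c ^ 2 / 2 with hε_def
  have hεpos : 0 < ε := by positivity
  have hGo := Asymptotics.isLittleO_iff.mp (hasDerivAt_iff_isLittleO.mp hG) hεpos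
  simp only [hgain0, sub_zero, smul_zero] at hGo
  rw [Metric.eventually_nhds_iff] at hGo
  obtain ⟨δ, hδpos, hδ⟩ := hGo
  -- quadratic bound on the right of t₀
  have hq : ∀ t ∈ Set.Icc t₀ (t₀ + δ / 2), μ t x ≤ ε / 2 * (t - t₀) ^ 2 := by
    intro t ht
    set q : ℝ → ℝ := fun s => ε / 2 * (s - t₀) ^ 2 - μ s x with hq_def
    have hq' : ∀ s, HasDerivAt q (ε / 2 * (2 * (s - t₀)) - (gain s - loss s)) s := by
      intro s
      have h1 := ((((hasDerivAt_id s).sub_const t₀).fun_pow 2).const_mul (ε / 2)).fun_sub (hm' s)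
      refine h1.congr_deriv ?_
      simp only [id_eq, pow_one]
      push_cast
      ring
    have hmono : MonotoneOn q (Set.Icc t₀ (t₀ + δ / 2)) := by
      have hqdiff : Differentiable ℝ q := fun s => (hq' s).differentiableAt
      refine monotoneOn_of_deriv_nonneg (convex_Icc _ _)
        hqdiff.continuous.continuousOn
        (fun s _ => (hq' s).differentiableAt.differentiableWithinAt)
        (fun s hs => ?_)
      · rw [interior_Icc] at hs
        rw [(hq' s).deriv]
        have hdist : dist s t₀ < δ := by
          rw [Real.dist_eq, abs_of_pos (by linarith [hs.1])]
          linarith [hs.2]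
        have hb := hδ hdist
        rw [Real.norm_eq_abs, Real.norm_eq_abs] at hb
        have hgb : gain s ≤ ε * |s - t₀| := (le_abs_self _).trans hb
        rw [abs_of_pos (by linarith [hs.1])] at hgb
        have := hloss_nonneg s
        nlinarith [hs.1]
    have h5 : q t₀ ≤ q t := hmono (Set.left_mem_Icc.mpr (by linarith [ht.2, ht.1])) ht ht.1
    simp only [hq_def, sub_self, hx0] at h5
    have h5' : 0 ≤ ε / 2 * (t - t₀) ^ 2 - μ t x := by
      simpa using h5
    linarith
  -- conclude
  have hmem : Set.Ioo (t₀ - 1) (t₀ + δ / 2) ∈ nhds t₀ :=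
    Ioo_mem_nhds (by linarith) (by linarith)
  filter_upwards [hmem] with t ht
  rw [Real.norm_eq_abs, Real.norm_eq_abs]
  rcases le_or_gt t t₀ with hle | hgt
  · rw [hleft t hle]
    simp only [Real.log_zero, mul_zero, zero_mul, abs_zero]
    positivity
  · have htIcc : t ∈ Set.Icc t₀ (t₀ + δ / 2) := ⟨hgt.le, (ht.2).le⟩
    have hb := hq t htIcc
    have h1 : |μ t x * Real.log (μ t x)| ≤ 2 * Real.sqrt (μ t x) :=
      mul_log_le_sqrt _ (hm0 t) (hm1 t)
    have h2 : Real.sqrt (μ t x) ≤ Real.sqrt (ε / 2 * (t - t₀) ^ 2) :=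
      Real.sqrt_le_sqrt hb
    have h3 : Real.sqrt (ε / 2 * (t - t₀) ^ 2)
        = Real.sqrt (ε / 2) * |t - t₀| := by
      rw [Real.sqrt_mul (by positivity), Real.sqrt_sq_eq_abs]
    have h4 : Real.sqrt (ε / 2) = c / 2 := by
      rw [show ε / 2 = (c / 2) ^ 2 by rw [hε_def]; ring, Real.sqrt_sq (by positivity)]
    calc |μ t x * Real.log (μ t x)| ≤ 2 * Real.sqrt (μ t x) := h1
      _ ≤ 2 * (Real.sqrt (ε / 2) * |t - t₀|) := by
          rw [← h3]; linarith
      _ = c * |t - t₀| := by rw [h4]; ring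

end Analysis


/-- entropy is a strict Lyapunov function for the recombination dynamics: along
a solution consisting of probability mass functions, if at time `t₀` the measure is strictly
positive and not `𝒥`-separated then `t ↦ H(μ^t)` has strictly negative derivative at `t₀`,
and if it is `𝒥`-separated then this derivative is zero. -/
theorem entropy_lyapunov {Λ : Type*} [Fintype Λ] [DecidableEq Λ] [Nonempty Λ]
    (K : Λ → Type*) [∀ i, Fintype (K i)] [∀ i, DecidableEq (K i)] [∀ i, Nonempty (K i)]
    (𝒥 : Finset (Finset Λ))
    (φ : ∀ I : Finset Λ, (∀ i : I, K i) → (∀ i : I, K i) → ℝ)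
    (hφpos : ∀ I ∈ 𝒥, ∀ a b, 0 < φ I a b)
    (hφsymm : ∀ I ∈ 𝒥, ∀ a b, φ I a b = φ I b a)
    (μ : ℝ → (∀ i, K i) → ℝ)
    (hsol : ∀ x t, HasDerivAt (fun s => μ s x) (recombRHS K 𝒥 φ (μ t) x) t)
    (hpmf : ∀ t, IsPMF K (μ t))
    (t₀ : ℝ) :
    ((∀ x, 0 < μ t₀ x) → ¬ IsSeparated K 𝒥 (μ t₀) →
      ∃ d : ℝ, d < 0 ∧ HasDerivAt (fun t => minusEntropy K (μ t)) d t₀) ∧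
    (IsSeparated K 𝒥 (μ t₀) →
      HasDerivAt (fun t => minusEntropy K (μ t)) 0 t₀) := by
  have hp1 : ∀ t, ∀ x, 0 ≤ μ t x := fun t => (hpmf t).1
  have hp2 : ∀ t, ∑ x : ∀ i, K i, μ t x = 1 := fun t => (hpmf t).2
  constructor
  · intro hpos hnotsep
    refine ⟨∑ x : ∀ i, K i, recombRHS K 𝒥 φ (μ t₀) x * Real.log (μ t₀ x),
      D_neg (μ t₀) hpos (hp2 t₀) 𝒥 φ hφpos hφsymm hnotsep, ?_⟩
    have hsum0 : ∑ x : ∀ i, K i, recombRHS K 𝒥 φ (μ t₀) x = 0 := by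
      have h1 : HasDerivAt (fun t => ∑ x : ∀ i, K i, μ t x)
          (∑ x : ∀ i, K i, recombRHS K 𝒥 φ (μ t₀) x) t₀ :=
        HasDerivAt.fun_sum fun x _ => hsol x t₀
      have h2 : (fun t => ∑ x : ∀ i, K i, μ t x) = fun _ => (1:ℝ) :=
        funext fun t => hp2 t
      rw [h2] at h1
      exact h1.unique (hasDerivAt_const t₀ 1)
    have hder : ∀ x : ∀ i, K i, HasDerivAt (fun t => μ t x * Real.log (μ t x))
        (recombRHS K 𝒥 φ (μ t₀) x * (Real.log (μ t₀ x) + 1)) t₀ := by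
      intro x
      have hg : HasDerivAt (fun u : ℝ => u * Real.log u) (Real.log (μ t₀ x) + 1) (μ t₀ x) := by
        have h3 := (hasDerivAt_id (μ t₀ x)).fun_mul (Real.hasDerivAt_log (hpos x).ne')
        refine h3.congr_deriv ?_
        simp [(hpos x).ne']
      have h4 := hg.comp t₀ (hsol x t₀)
      simp only [Function.comp_def] at h4
      refine h4.congr_deriv ?_
      ring
    have htotal : HasDerivAt (fun t => minusEntropy K (μ t))
        (∑ x : ∀ i, K i, recombRHS K 𝒥 φ (μ t₀) x * (Real.log (μ t₀ x) + 1)) t₀ := by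
      have h5 := HasDerivAt.fun_sum (fun x (_ : x ∈ Finset.univ) => hder x)
      simpa [minusEntropy] using h5
    convert htotal using 1
    simp only [mul_add, mul_one, Finset.sum_add_distrib, hsum0, add_zero]
  · intro hsep
    have hrhs0 : ∀ x, recombRHS K 𝒥 φ (μ t₀) x = 0 :=
      sep_rhs_zero (μ t₀) 𝒥 φ hφsymm hsep
    have hder : ∀ x : ∀ i, K i, HasDerivAt (fun t => μ t x * Real.log (μ t x)) 0 t₀ := by
      intro x
      rcases (hp1 t₀ x).eq_or_lt with h | h
      · exact zero_deriv 𝒥 φ hφpos μ hsol (fun t => ⟨hp1 t, hp2 t⟩) t₀ x h.symm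
      · have hg : HasDerivAt (fun u : ℝ => u * Real.log u) (Real.log (μ t₀ x) + 1) (μ t₀ x) := by
          have h3 := (hasDerivAt_id (μ t₀ x)).fun_mul (Real.hasDerivAt_log h.ne')
          refine h3.congr_deriv ?_
          simp [h.ne']
        have hs := hsol x t₀
        rw [hrhs0 x] at hs
        have h4 := hg.comp t₀ hs
        simp only [Function.comp_def, mul_zero] at h4
        exact h4
    have h6 := HasDerivAt.fun_sum (fun x (_ : x ∈ Finset.univ) => hder x)
    simpa [minusEntropy] using h6
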